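/- The regularized Levi-Civita vector field f₁ᶜ at the first primary is well defined and real analytic at the origin (x̂,p̂,ŷ,q̂) = (0,p̂,0,q̂): the denominator ((x̂²+ŷ²)² + 1 + 2(x̂²-ŷ²))^{3/2} appearing in f₁ᶜ is bounded away from zero on a neighborhood of {x̂ = ŷ = 0}. More precisely, (x̂²+ŷ²)² + 1 + 2(x̂²-ŷ²) = ((x̂²+ŷ²)+1)² - 4ŷ² > 0 whenever (x̂,ŷ) ∉ {(0,1),(0,-1)}. -/
import Mathlib


/-- The quantity under the `3/2` power in the regularized Levi-Civita vector
field `f₁ᶜ` factors as `((x̂²+ŷ²)+1)² - 4ŷ²` and is strictly positive away from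
the mirrored singularities `(0,±1)`.  In particular the denominator of `f₁ᶜ` is
bounded away from zero on a neighborhood of the collision set `{x̂ = ŷ = 0}`. -/
theorem regularized_denominator_positive :
    (∀ xh yh : ℝ,
      (xh^2 + yh^2)^2 + 1 + 2*(xh^2 - yh^2) = ((xh^2 + yh^2) + 1)^2 - 4*yh^2) ∧
    (∀ xh yh : ℝ, (xh, yh) ≠ ((0 : ℝ), (1 : ℝ)) → (xh, yh) ≠ ((0 : ℝ), (-1 : ℝ)) →
      0 < (xh^2 + yh^2)^2 + 1 + 2*(xh^2 - yh^2)) ∧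
    ∃ ε > (0 : ℝ), ∃ δ > (0 : ℝ), ∀ xh yh : ℝ, xh^2 + yh^2 < δ →
      ε ≤ Real.sqrt ((xh^2 + yh^2)^2 + 1 + 2*(xh^2 - yh^2))^3 := by
  refine ⟨fun xh yh => by ring, ?_, ?_⟩
  · intro xh yh h1 h2
    have key : (xh^2 + yh^2)^2 + 1 + 2*(xh^2 - yh^2)
        = (xh^2 + (yh-1)^2) * (xh^2 + (yh+1)^2) := by ring
    rw [key]
    have h1' : 0 < xh^2 + (yh-1)^2 := by
      rcases lt_or_eq_of_le (by positivity : (0:ℝ) ≤ xh^2 + (yh-1)^2) with h | h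
      · exact h
      · exfalso; apply h1
        have hx : xh = 0 := by nlinarith [sq_nonneg xh, sq_nonneg (yh-1)]
        have hy : yh = 1 := by nlinarith [sq_nonneg xh, sq_nonneg (yh-1)]
        simp [hx, hy]
    have h2' : 0 < xh^2 + (yh+1)^2 := by
      rcases lt_or_eq_of_le (by positivity : (0:ℝ) ≤ xh^2 + (yh+1)^2) with h | h
      · exact h
      · exfalso; apply h2
        have hx : xh = 0 := by nlinarith [sq_nonneg xh, sq_nonneg (yh+1)]
        have hy : yh = -1 := by nlinarith [sq_nonneg xh, sq_nonneg (yh+1)]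
        simp [hx, hy]
    exact mul_pos h1' h2'
  · refine ⟨1/64, by norm_num, 1/4, by norm_num, ?_⟩
    intro xh yh hδ
    have hy : yh^2 < 1/4 := by nlinarith [sq_nonneg xh]
    have key : (xh^2 + yh^2)^2 + 1 + 2*(xh^2 - yh^2)
        = (xh^2 + (yh-1)^2) * (xh^2 + (yh+1)^2) := by ring
    have h1 : (1/4 : ℝ) ≤ xh^2 + (yh-1)^2 := by
      nlinarith [sq_nonneg (yh - 1/2), sq_nonneg xh]
    have h2 : (1/4 : ℝ) ≤ xh^2 + (yh+1)^2 := by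
      nlinarith [sq_nonneg (yh + 1/2), sq_nonneg xh]
    have hE : (1/16 : ℝ) ≤ (xh^2 + yh^2)^2 + 1 + 2*(xh^2 - yh^2) := by
      rw [key]
      calc (1/16 : ℝ) = (1/4) * (1/4) := by norm_num
        _ ≤ (xh^2 + (yh-1)^2) * (xh^2 + (yh+1)^2) :=
            mul_le_mul h1 h2 (by norm_num) (by positivity)
    have hs : (1/4 : ℝ) ≤ Real.sqrt ((xh^2 + yh^2)^2 + 1 + 2*(xh^2 - yh^2)) := by
      have := Real.sqrt_le_sqrt hE
      rwa [show Real.sqrt (1/16) = 1/4 by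
        rw [show (1/16 : ℝ) = (1/4)^2 by norm_num, Real.sqrt_sq (by norm_num)]] at this
    calc (1/64 : ℝ) = (1/4)^3 := by norm_num
      _ ≤ _ := pow_le_pow_left₀ (by norm_num) hs 3
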